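/- Let A be a Hopf algebra, P a right A-comodule algebra with coinvariants B, and Φ : A → P convolution invertible with Δ_R ∘ Φ = (Φ ⊗ id) ∘ Δ and Φ(1) = 1. Then the map s_Φ : P → P defined by s_Φ(p) = p₍₀₎ Φ⁻¹(p₍₁₎) takes values in B, i.e. Δ_R(s_Φ(p)) = s_Φ(p) ⊗ 1 for all p ∈ P; moreover s_Φ is a left B-module homomorphism and s_Φ ∘ Φ = η_P ∘ ε. -/

import Mathlib

open TensorProduct

variable (k : Type*) [Field k] {A P : Type*} [Ring A] [HopfAlgebra k A]
  [Ring P] [Algebra k P]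

/-- Convolution of linear maps `A → P`: `(f * g)(a) = f(a₍₁₎) g(a₍₂₎)`. -/
noncomputable def conv (f g : A →ₗ[k] P) : A →ₗ[k] P :=
  (LinearMap.mul' k P) ∘ₗ (TensorProduct.map f g) ∘ₗ (Coalgebra.comul (R := k) (A := A))

/-- The convolution unit `η_P ∘ ε`. -/
noncomputable def convUnit : A →ₗ[k] P :=
  (Algebra.linearMap k P) ∘ₗ (Coalgebra.counit (R := k) (A := A))

/-- The section `s_Φ : P → P`, `p ↦ p₍₀₎ Φ⁻¹(p₍₁₎)`, where `Ψ = Φ⁻¹`. -/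
noncomputable def sPhi (ρ : P →ₐ[k] P ⊗[k] A) (Ψ : A →ₗ[k] P) : P →ₗ[k] P :=
  (LinearMap.mul' k P) ∘ₗ (LinearMap.lTensor P Ψ) ∘ₗ ρ.toLinearMap

section ConvAux

variable {M N : Type*} [Ring M] [Algebra k M] [Ring N] [Algebra k N]

/-- Convolution with values in an arbitrary algebra `M`. -/
noncomputable def convM (f g : A →ₗ[k] M) : A →ₗ[k] M :=
  (LinearMap.mul' k M) ∘ₗ (TensorProduct.map f g) ∘ₗ (Coalgebra.comul (R := k) (A := A))

/-- The convolution unit with values in `M`. -/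
noncomputable def convUnitM : A →ₗ[k] M :=
  (Algebra.linearMap k M) ∘ₗ (Coalgebra.counit (R := k) (A := A))

lemma convM_apply_repr (f g : A →ₗ[k] M) {a : A} {ι : Type*} (r : Coalgebra.Repr k a ι) :
    convM k f g a = ∑ i ∈ r.index, f (r.left i) * g (r.right i) := by
  simp only [convM, LinearMap.comp_apply, ← r.eq, map_sum, TensorProduct.map_tmul,
    LinearMap.mul'_apply]

lemma convM_assoc (f g h : A →ₗ[k] M) :
    convM k (convM k f g) h = convM k f (convM k g h) := by
  apply LinearMap.ext; intro a
  set m := LinearMap.mul' k M with hm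
  set Δ := Coalgebra.comul (R := k) (A := A) with hΔ
  have h1 : TensorProduct.map (convM k f g) h =
      TensorProduct.map (m ∘ₗ TensorProduct.map f g) h ∘ₗ TensorProduct.map Δ LinearMap.id := by
    rw [← TensorProduct.map_comp, LinearMap.comp_id]
    rfl
  have h2 : TensorProduct.map f (convM k g h) =
      TensorProduct.map f (m ∘ₗ TensorProduct.map g h) ∘ₗ TensorProduct.map LinearMap.id Δ := by
    rw [← TensorProduct.map_comp, LinearMap.comp_id]
    rfl
  have hL : ∀ x : (A ⊗[k] A) ⊗[k] A,
      m (TensorProduct.map (m ∘ₗ TensorProduct.map f g) h x) =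
        m (TensorProduct.map f (m ∘ₗ TensorProduct.map g h)
          ((TensorProduct.assoc k A A A) x)) := by
    intro x
    refine LinearMap.congr_fun (f := m ∘ₗ TensorProduct.map (m ∘ₗ TensorProduct.map f g) h)
      (g := (m ∘ₗ TensorProduct.map f (m ∘ₗ TensorProduct.map g h)) ∘ₗ
        (TensorProduct.assoc k A A A).toLinearMap) ?_ x
    apply TensorProduct.ext_threefold; intro x y z
    simp [hm, mul_assoc]
  have hco : TensorProduct.map LinearMap.id Δ (Δ a) =
      (TensorProduct.assoc k A A A) (TensorProduct.map Δ LinearMap.id (Δ a)) := by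
    have := Coalgebra.coassoc_apply (R := k) a
    simpa [LinearMap.rTensor, LinearMap.lTensor] using this.symm
  show m (TensorProduct.map (convM k f g) h (Δ a)) = m (TensorProduct.map f (convM k g h) (Δ a))
  rw [h1, h2]
  simp only [LinearMap.comp_apply]
  rw [hL, ← hco]

lemma convM_unit_right (f : A →ₗ[k] M) : convM k f (convUnitM k) = f := by
  apply LinearMap.ext; intro a
  set r := Coalgebra.Repr.arbitrary k a
  rw [convM_apply_repr k f _ r]
  have hsum : ∑ i ∈ r.index, Coalgebra.counit (R := k) (r.right i) • r.left i = a := by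
    have h0 := congrArg (TensorProduct.rid k A) (Coalgebra.sum_tmul_counit_eq r)
    rw [map_sum] at h0
    simp only [TensorProduct.rid_tmul, one_smul] at h0
    exact h0
  calc ∑ i ∈ r.index, f (r.left i) * convUnitM k (r.right i)
      = ∑ i ∈ r.index, Coalgebra.counit (R := k) (r.right i) • f (r.left i) := by
        refine Finset.sum_congr rfl fun i _ => ?_
        simp [convUnitM, Algebra.algebraMap_eq_smul_one, mul_smul_comm]
    _ = f (∑ i ∈ r.index, Coalgebra.counit (R := k) (r.right i) • r.left i) := by
        rw [map_sum]
        simp [map_smul]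
    _ = f a := by rw [hsum]

lemma algHom_comp_convM (φ : M →ₐ[k] N) (f g : A →ₗ[k] M) :
    φ.toLinearMap ∘ₗ convM k f g = convM k (φ.toLinearMap ∘ₗ f) (φ.toLinearMap ∘ₗ g) := by
  apply LinearMap.ext; intro a
  have r : Coalgebra.Repr k a (A × A) := Coalgebra.Repr.arbitrary k a
  rw [LinearMap.comp_apply, convM_apply_repr (A := A) k f g r,
    convM_apply_repr (A := A) k _ _ r]
  simp [map_sum]

lemma algHom_comp_convUnitM (φ : M →ₐ[k] N) :
    φ.toLinearMap ∘ₗ convUnitM (A := A) k = convUnitM (A := A) k := by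
  apply LinearMap.ext; intro a
  simp [convUnitM]

end ConvAux

/-- `p ↦ p ⊗ 1`. -/
noncomputable def incl1 : P →ₗ[k] P ⊗[k] A := (TensorProduct.mk k P A).flip 1

/-- `a ↦ 1 ⊗ a`. -/
noncomputable def incl2 : A →ₗ[k] P ⊗[k] A := TensorProduct.mk k P A 1

lemma conv3 (ρ : P →ₐ[k] P ⊗[k] A) (Φ Ψ : A →ₗ[k] P)
    (hinv₂ : convM k Ψ Φ = convUnitM k)
    (hΦ : ρ.toLinearMap ∘ₗ Φ =
      (TensorProduct.map Φ LinearMap.id) ∘ₗ (Coalgebra.comul (R := k) (A := A))) :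
    convM k (incl1 k (A := A) ∘ₗ Ψ) (ρ.toLinearMap ∘ₗ Φ) = incl2 k (P := P) := by
  apply LinearMap.ext; intro a
  rw [hΦ]
  set m := LinearMap.mul' k (P ⊗[k] A) with hm
  set Δ := Coalgebra.comul (R := k) (A := A) with hΔ
  have h2 : TensorProduct.map (incl1 k (A := A) ∘ₗ Ψ) (TensorProduct.map Φ LinearMap.id ∘ₗ Δ) =
      TensorProduct.map (incl1 k (A := A) ∘ₗ Ψ) (TensorProduct.map Φ LinearMap.id) ∘ₗ
        TensorProduct.map LinearMap.id Δ := by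
    rw [← TensorProduct.map_comp, LinearMap.comp_id]
  have hco : TensorProduct.map LinearMap.id Δ (Δ a) =
      (TensorProduct.assoc k A A A) (TensorProduct.map Δ LinearMap.id (Δ a)) := by
    have := Coalgebra.coassoc_apply (R := k) a
    simpa [LinearMap.rTensor, LinearMap.lTensor] using this.symm
  have hC : ∀ x : (A ⊗[k] A) ⊗[k] A,
      m (TensorProduct.map (incl1 k (A := A) ∘ₗ Ψ) (TensorProduct.map Φ LinearMap.id)
        ((TensorProduct.assoc k A A A) x)) =
      LinearMap.rTensor A (LinearMap.mul' k P ∘ₗ TensorProduct.map Ψ Φ) x := by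
    intro x
    refine LinearMap.congr_fun
      (f := (m ∘ₗ TensorProduct.map (incl1 k (A := A) ∘ₗ Ψ) (TensorProduct.map Φ LinearMap.id)) ∘ₗ
        (TensorProduct.assoc k A A A).toLinearMap)
      (g := LinearMap.rTensor A (LinearMap.mul' k P ∘ₗ TensorProduct.map Ψ Φ)) ?_ x
    apply TensorProduct.ext_threefold; intro x y z
    simp [hm, incl1, Algebra.TensorProduct.tmul_mul_tmul]
  show m (TensorProduct.map (incl1 k (A := A) ∘ₗ Ψ) (TensorProduct.map Φ LinearMap.id ∘ₗ Δ) (Δ a)) =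
    incl2 k (P := P) a
  rw [h2]
  simp only [LinearMap.comp_apply]
  rw [hco, hC]
  have hr : TensorProduct.map Δ LinearMap.id (Δ a) = LinearMap.rTensor A Δ (Δ a) := rfl
  rw [hr, ← LinearMap.rTensor_comp_apply]
  have hcv : (LinearMap.mul' k P ∘ₗ TensorProduct.map Ψ Φ) ∘ₗ Δ = convM k Ψ Φ := by
    rfl
  rw [hcv, hinv₂]
  have hdec : (convUnitM (M := P) k : A →ₗ[k] P) =
      Algebra.linearMap k P ∘ₗ Coalgebra.counit (R := k) (A := A) := rfl
  rw [hdec, LinearMap.rTensor_comp, LinearMap.comp_apply]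
  rw [Coalgebra.rTensor_counit_comul (R := k) a]
  simp [incl2]

lemma keyLemma (ρ : P →ₐ[k] P ⊗[k] A) (Φ Ψ : A →ₗ[k] P)
    (hinv₁ : convM k Φ Ψ = convUnitM k) (hinv₂ : convM k Ψ Φ = convUnitM k)
    (hΦ : ρ.toLinearMap ∘ₗ Φ =
      (TensorProduct.map Φ LinearMap.id) ∘ₗ (Coalgebra.comul (R := k) (A := A))) :
    convM k (incl2 k (P := P)) (ρ.toLinearMap ∘ₗ Ψ) = incl1 k (A := A) ∘ₗ Ψ := by
  calc convM k (incl2 k (P := P)) (ρ.toLinearMap ∘ₗ Ψ)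
      = convM k (convM k (incl1 k (A := A) ∘ₗ Ψ) (ρ.toLinearMap ∘ₗ Φ)) (ρ.toLinearMap ∘ₗ Ψ) := by
        rw [conv3 k ρ Φ Ψ hinv₂ hΦ]
    _ = convM k (incl1 k (A := A) ∘ₗ Ψ) (convM k (ρ.toLinearMap ∘ₗ Φ) (ρ.toLinearMap ∘ₗ Ψ)) :=
        convM_assoc k _ _ _
    _ = convM k (incl1 k (A := A) ∘ₗ Ψ) (ρ.toLinearMap ∘ₗ convM k Φ Ψ) := by
        rw [algHom_comp_convM]
    _ = convM k (incl1 k (A := A) ∘ₗ Ψ) (convUnitM k) := by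
        rw [hinv₁, algHom_comp_convUnitM]
    _ = incl1 k (A := A) ∘ₗ Ψ := convM_unit_right k _

set_option maxHeartbeats 1600000 in
/-- for a trivialization `Φ` (convolution invertible,
right-covariant, unital), the map `s_Φ(p) = p₍₀₎ Φ⁻¹(p₍₁₎)` takes values in the
coinvariants `B`, is a left `B`-module homomorphism, and `s_Φ ∘ Φ = η_P ∘ ε`. -/
theorem stmt7 (ρ : P →ₐ[k] P ⊗[k] A)
    (hcoassoc : (LinearMap.rTensor A ρ.toLinearMap) ∘ₗ ρ.toLinearMap =
      (TensorProduct.assoc k P A A).symm.toLinearMap ∘ₗ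
        (LinearMap.lTensor P (Coalgebra.comul (R := k) (A := A))) ∘ₗ ρ.toLinearMap)
    (hcounit : (TensorProduct.rid k P).toLinearMap ∘ₗ
      (LinearMap.lTensor P (Coalgebra.counit (R := k) (A := A))) ∘ₗ ρ.toLinearMap =
        LinearMap.id)
    (Φ Ψ : A →ₗ[k] P)
    (hinv₁ : conv k Φ Ψ = convUnit k) (hinv₂ : conv k Ψ Φ = convUnit k)
    (hΦ : ρ.toLinearMap ∘ₗ Φ =
      (TensorProduct.map Φ LinearMap.id) ∘ₗ (Coalgebra.comul (R := k) (A := A)))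
    (hΦ1 : Φ 1 = 1) :
    (∀ p : P, ρ (sPhi k ρ Ψ p) = (sPhi k ρ Ψ p) ⊗ₜ[k] (1 : A)) ∧
      (∀ b p : P, ρ b = b ⊗ₜ[k] (1 : A) →
        sPhi k ρ Ψ (b * p) = b * sPhi k ρ Ψ p) ∧
      (∀ a : A, sPhi k ρ Ψ (Φ a) =
        algebraMap k P (Coalgebra.counit (R := k) (A := A) a)) := by
  have hinv₁' : convM k Φ Ψ = convUnitM k := hinv₁
  have hinv₂' : convM k Ψ Φ = convUnitM k := hinv₂
  have key := keyLemma k ρ Φ Ψ hinv₁' hinv₂' hΦ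
  refine ⟨?_, ?_, ?_⟩
  · -- coinvariance
    intro p
    set Δ := Coalgebra.comul (R := k) (A := A) with hΔ
    -- step A : ρ (sPhi p) = L1 (ρ p)
    have hmul : ∀ t : P ⊗[k] P,
        ρ.toLinearMap (LinearMap.mul' k P t) =
          LinearMap.mul' k (P ⊗[k] A)
            (TensorProduct.map ρ.toLinearMap ρ.toLinearMap t) := by
      intro t
      refine LinearMap.congr_fun
        (f := ρ.toLinearMap ∘ₗ LinearMap.mul' k P)
        (g := LinearMap.mul' k (P ⊗[k] A) ∘ₗ TensorProduct.map ρ.toLinearMap ρ.toLinearMap)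
        ?_ t
      apply TensorProduct.ext'; intro x y
      simp [map_mul]
    have hmaps : ∀ t : P ⊗[k] A,
        TensorProduct.map ρ.toLinearMap ρ.toLinearMap (LinearMap.lTensor P Ψ t) =
          LinearMap.lTensor (P ⊗[k] A) (ρ.toLinearMap ∘ₗ Ψ)
            (LinearMap.rTensor A ρ.toLinearMap t) := by
      intro t
      refine LinearMap.congr_fun
        (f := TensorProduct.map ρ.toLinearMap ρ.toLinearMap ∘ₗ LinearMap.lTensor P Ψ)
        (g := LinearMap.lTensor (P ⊗[k] A) (ρ.toLinearMap ∘ₗ Ψ) ∘ₗ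
          LinearMap.rTensor A ρ.toLinearMap) ?_ t
      apply TensorProduct.ext'; intro x y
      simp
    have hcop : LinearMap.rTensor A ρ.toLinearMap (ρ p) =
        (TensorProduct.assoc k P A A).symm.toLinearMap (LinearMap.lTensor P Δ (ρ p)) :=
      LinearMap.congr_fun hcoassoc p
    have stepA : ρ (sPhi k ρ Ψ p) =
        LinearMap.mul' k (P ⊗[k] A)
          (LinearMap.lTensor (P ⊗[k] A) (ρ.toLinearMap ∘ₗ Ψ)
            ((TensorProduct.assoc k P A A).symm.toLinearMap (LinearMap.lTensor P Δ (ρ p)))) := by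
      show ρ.toLinearMap (sPhi k ρ Ψ p) = _
      rw [show sPhi k ρ Ψ p = LinearMap.mul' k P (LinearMap.lTensor P Ψ (ρ p)) from rfl,
        hmul, hmaps, hcop]
    -- step B : the map L1 equals L2
    have stepB : ∀ t : P ⊗[k] A,
        LinearMap.mul' k (P ⊗[k] A)
          (LinearMap.lTensor (P ⊗[k] A) (ρ.toLinearMap ∘ₗ Ψ)
            ((TensorProduct.assoc k P A A).symm.toLinearMap (LinearMap.lTensor P Δ t))) =
          (LinearMap.mul' k P (LinearMap.lTensor P Ψ t)) ⊗ₜ[k] (1 : A) := by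
      intro t
      induction t using TensorProduct.induction_on with
      | zero => simp only [map_zero, TensorProduct.zero_tmul]
      | add x y hx hy =>
          simp only [map_add] at hx hy ⊢
          rw [hx, hy, TensorProduct.add_tmul]
      | tmul p' a =>
          set r := Coalgebra.Repr.arbitrary k a with hrdef
          have h1 : LinearMap.lTensor P Δ (p' ⊗ₜ[k] a) = p' ⊗ₜ[k] (Δ a) := rfl
          rw [h1, ← r.eq, TensorProduct.tmul_sum]
          simp only [map_sum]
          have h2 : ∀ i ∈ r.index,
              LinearMap.mul' k (P ⊗[k] A)
                (LinearMap.lTensor (P ⊗[k] A) (ρ.toLinearMap ∘ₗ Ψ)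
                  ((TensorProduct.assoc k P A A).symm.toLinearMap
                    (p' ⊗ₜ[k] (r.left i ⊗ₜ[k] r.right i)))) =
                (p' ⊗ₜ[k] (1 : A)) * ((incl2 k (P := P) (r.left i)) * (ρ.toLinearMap (Ψ (r.right i)))) := by
            intro i _
            have e : (TensorProduct.assoc k P A A).symm.toLinearMap
                (p' ⊗ₜ[k] (r.left i ⊗ₜ[k] r.right i)) =
                (p' ⊗ₜ[k] r.left i) ⊗ₜ[k] r.right i :=
              TensorProduct.assoc_symm_tmul p' (r.left i) (r.right i)
            rw [e, LinearMap.lTensor_tmul, LinearMap.mul'_apply]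
            rw [← mul_assoc]
            congr 1
            show p' ⊗ₜ[k] r.left i = (p' ⊗ₜ[k] (1 : A)) * ((1 : P) ⊗ₜ[k] r.left i)
            rw [Algebra.TensorProduct.tmul_mul_tmul, mul_one, one_mul]
          rw [Finset.sum_congr rfl h2, ← Finset.mul_sum]
          have h3 : ∑ i ∈ r.index, incl2 k (P := P) (r.left i) * ρ.toLinearMap (Ψ (r.right i)) =
              convM k (incl2 k (P := P)) (ρ.toLinearMap ∘ₗ Ψ) a := by
            rw [convM_apply_repr (A := A) k _ _ r]
            rfl
          rw [h3, key]
          simp [incl1, Algebra.TensorProduct.tmul_mul_tmul]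
    rw [stepA, stepB (ρ p)]
    rfl
  · -- left B-linearity
    intro b p hb
    have h1 : sPhi k ρ Ψ (b * p) =
        LinearMap.mul' k P (LinearMap.lTensor P Ψ ((b ⊗ₜ[k] (1 : A)) * ρ p)) := by
      show LinearMap.mul' k P (LinearMap.lTensor P Ψ (ρ.toLinearMap (b * p))) = _
      rw [show ρ.toLinearMap (b * p) = ρ (b * p) from rfl, map_mul, hb]
    rw [h1]
    have h2 : ∀ t : P ⊗[k] A,
        LinearMap.mul' k P (LinearMap.lTensor P Ψ ((b ⊗ₜ[k] (1 : A)) * t)) =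
          b * LinearMap.mul' k P (LinearMap.lTensor P Ψ t) := by
      intro t
      induction t using TensorProduct.induction_on with
      | zero => simp
      | add x y hx hy => simp only [mul_add, map_add, hx, hy]
      | tmul p' a =>
          rw [Algebra.TensorProduct.tmul_mul_tmul, one_mul, LinearMap.lTensor_tmul,
            LinearMap.lTensor_tmul, LinearMap.mul'_apply, LinearMap.mul'_apply, mul_assoc]
    rw [h2]
    rfl
  · -- s ∘ Φ = η ∘ ε
    intro a
    have h1 := LinearMap.congr_fun hΦ a
    simp only [LinearMap.comp_apply] at h1
    set r := Coalgebra.Repr.arbitrary k a with hrdef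
    have h2 : sPhi k ρ Ψ (Φ a) = ∑ i ∈ r.index, Φ (r.left i) * Ψ (r.right i) := by
      show LinearMap.mul' k P (LinearMap.lTensor P Ψ (ρ.toLinearMap (Φ a))) = _
      rw [h1, ← r.eq]
      simp only [map_sum, TensorProduct.map_tmul, LinearMap.lTensor_tmul,
        LinearMap.mul'_apply, LinearMap.id_coe, id_eq]
    rw [h2, ← convM_apply_repr (A := A) k Φ Ψ r, hinv₁']
    simp [convUnitM]
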